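/- Failure of the discrete maximization condition: on 𝕋 = {0,1,2} consider the system q(k+1) = q(k) + u(k) − q(k) (i.e. q(k+1) = u(k)) with q(0)=0, controls u(k) ∈ [0,1], and cost Σ_{k=0}^{1} (2q(k)² − u(k)²). Then the cost of the trajectory associated to (u(0),u(1)) equals u(0)² − u(1)², and the unique optimal control is u*(0) = 0, u*(1) = 1. -/

import Mathlib

/-- Trajectory of the discrete system q(k+1) = u(k), q(0) = 0. -/
def traj11 (u : ℕ → ℝ) : ℕ → ℝ
  | 0 => 0
  | k + 1 => traj11 u k + (u k - traj11 u k)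

/-- Cost Σ_{k=0}^{1} (2 q(k)² − u(k)²). -/
noncomputable def cost11 (u : ℕ → ℝ) : ℝ :=
  ∑ k ∈ Finset.range 2, (2 * (traj11 u k) ^ 2 - (u k) ^ 2)

lemma cost11_eq (u : ℕ → ℝ) : cost11 u = (u 0) ^ 2 - (u 1) ^ 2 := by
  simp [cost11, Finset.sum_range_succ, traj11]
  ring

theorem stmt11 :
    (∀ u : ℕ → ℝ, cost11 u = (u 0) ^ 2 - (u 1) ^ 2) ∧
    (∀ u : ℕ → ℝ, (∀ k < 2, u k ∈ Set.Icc (0 : ℝ) 1) →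
      cost11 (fun k => if k = 0 then 0 else 1) ≤ cost11 u) ∧
    (∀ u : ℕ → ℝ, (∀ k < 2, u k ∈ Set.Icc (0 : ℝ) 1) →
      (∀ u' : ℕ → ℝ, (∀ k < 2, u' k ∈ Set.Icc (0 : ℝ) 1) → cost11 u ≤ cost11 u') →
      u 0 = 0 ∧ u 1 = 1) := by
  refine ⟨cost11_eq, ?_, ?_⟩
  · intro u hu
    have h0 := hu 0 (by norm_num)
    have h1 := hu 1 (by norm_num)
    rw [cost11_eq, cost11_eq]
    simp only [Set.mem_Icc] at h0 h1
    have : (u 1)^2 ≤ 1 := by nlinarith [h1.1, h1.2]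
    norm_num
    nlinarith [sq_nonneg (u 0)]
  · intro u hu hopt
    have h0 := hu 0 (by norm_num)
    have h1 := hu 1 (by norm_num)
    simp only [Set.mem_Icc] at h0 h1
    have key := hopt (fun k => if k = 0 then 0 else 1) (by
      intro k hk
      by_cases h : k = 0 <;> simp [h])
    rw [cost11_eq, cost11_eq] at key
    simp at key
    have hu1 : (u 1)^2 ≤ 1 := by nlinarith [h1.1, h1.2]
    constructor
    · nlinarith [sq_nonneg (u 0)]
    · nlinarith [sq_nonneg (u 0), sq_nonneg (u 1 - 1)]
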